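/- In the ring of formal power series ℤ⟦t⟧, (1 − t)^{d+1} · Σ_{n ≥ 0} χ_G(n) t^n = Σ_{π ∈ S_d} t^{c(π)}, where the right-hand sum is over all permutations π of [d] and c(π) is the number of cuts of π with respect to G. -/

import Mathlib

/-- `ellSpec G a k p` says that there are positions `i₁ < i₂ < ⋯ < i_p < i_{p+1} = k`
such that `a_{i_j}` and `a_{i_{j+1}}` are adjacent in `G` for all `j`. -/
def ellSpec {d : ℕ} (G : SimpleGraph (Fin d)) (a : Equiv.Perm (Fin d)) (k : Fin d)
    (p : ℕ) : Prop :=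
  ∃ c : Fin (p + 1) → Fin d, StrictMono c ∧ c (Fin.last p) = k ∧
    ∀ j : Fin p, G.Adj (a (c j.castSucc)) (a (c j.succ))

/-- `ell G a k` is the largest `p` such that `ellSpec G a k p` holds: the length of the
longest increasing path in `a` ending at position `k`. -/
noncomputable def ell {d : ℕ} (G : SimpleGraph (Fin d)) (a : Equiv.Perm (Fin d))
    (k : Fin d) : ℕ :=
  sSup {p | ellSpec G a k p}

/-- `j` is a cut of `a` (with respect to `G`): either `j` is the first position, or
comparing with the preceding position `i` we have `ℓ(i) < ℓ(j)`, or `ℓ(i) = ℓ(j)` and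
`a_i < a_j`.  (Cuts are located at the first position of each block; this is the
0-indexed version of the paper's cuts `k ∈ [0, d-1]`.) -/
noncomputable def IsCut {d : ℕ} (G : SimpleGraph (Fin d)) (a : Equiv.Perm (Fin d))
    (j : Fin d) : Prop :=
  (j : ℕ) = 0 ∨ ∃ i : Fin d, (i : ℕ) + 1 = (j : ℕ) ∧
    (ell G a i < ell G a j ∨ (ell G a i = ell G a j ∧ a i < a j))

/-- `c(π)`: the number of cuts of the permutation `a` with respect to `G`. -/
noncomputable def numCuts {d : ℕ} (G : SimpleGraph (Fin d))
    (a : Equiv.Perm (Fin d)) : ℕ :=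
  Nat.card {j : Fin d // IsCut G a j}

/-- `χ_G(n)`: the number of proper colorings of `G` with color set `{1, …, n}`. -/
noncomputable def chromVal {d : ℕ} (G : SimpleGraph (Fin d)) (n : ℕ) : ℕ :=
  Nat.card {φ : Fin d → Fin n // ∀ u v : Fin d, G.Adj u v → φ u ≠ φ v}

namespace WTC

variable {d n : ℕ} {G : SimpleGraph (Fin d)} {a : Equiv.Perm (Fin d)}

lemma ellSpec_zero (G : SimpleGraph (Fin d)) (a : Equiv.Perm (Fin d)) (k : Fin d) :
    ellSpec G a k 0 :=
  ⟨fun _ => k, fun i j h => by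
      have hi := i.is_lt; have hj := j.is_lt
      rw [Fin.lt_def] at h; omega,
    rfl, fun j => j.elim0⟩

lemma ellSpec_le (k : Fin d) {p : ℕ} (h : ellSpec G a k p) : p ≤ d := by
  obtain ⟨c, hc, -, -⟩ := h
  have := Fintype.card_le_of_injective c hc.injective
  simp only [Fintype.card_fin] at this
  omega

lemma ellSpec_bddAbove (k : Fin d) : BddAbove {p | ellSpec G a k p} :=
  ⟨d, fun _ hp => ellSpec_le k hp⟩

lemma ellSpec_ell (G : SimpleGraph (Fin d)) (a : Equiv.Perm (Fin d)) (k : Fin d) :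
    ellSpec G a k (ell G a k) := by
  have h0 : (0 : ℕ) ∈ {p | ellSpec G a k p} := ellSpec_zero G a k
  exact Nat.sSup_mem ⟨0, h0⟩ (ellSpec_bddAbove k)

lemma le_ell {k : Fin d} {p : ℕ} (h : ellSpec G a k p) : p ≤ ell G a k :=
  le_csSup (ellSpec_bddAbove k) h

lemma ellSpec_extend {i j : Fin d} {p : ℕ} (h : ellSpec G a i p) (hij : i < j)
    (hadj : G.Adj (a i) (a j)) : ellSpec G a j (p + 1) := by
  obtain ⟨c, hc, hlast, hadjc⟩ := h
  refine ⟨Fin.snoc c j, ?_, by simp, ?_⟩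
  · rw [Fin.strictMono_iff_lt_succ]
    intro t
    refine Fin.lastCases ?_ ?_ t
    · rw [Fin.succ_last]
      simp only [Fin.snoc_castSucc, Fin.snoc_last, hlast]
      exact hij
    · intro s
      rw [Fin.succ_castSucc]
      simp only [Fin.snoc_castSucc]
      exact hc (Fin.castSucc_lt_succ : s.castSucc < s.succ)
  · intro t
    refine Fin.lastCases ?_ ?_ t
    · rw [Fin.succ_last]
      simp only [Fin.snoc_castSucc, Fin.snoc_last, hlast]
      exact hadj
    · intro s
      rw [Fin.succ_castSucc]
      simp only [Fin.snoc_castSucc]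
      exact hadjc s

lemma ell_lt_ell {i j : Fin d} (hij : i < j) (hadj : G.Adj (a i) (a j)) :
    ell G a i < ell G a j :=
  Nat.lt_of_succ_le (le_ell (ellSpec_extend (ellSpec_ell G a i) hij hadj))




/-- Vertex version of `ellSpec`: a `G`-path ending at `v` along which `φ` strictly
increases. -/
def pathSpec {d n : ℕ} (G : SimpleGraph (Fin d)) (φ : Fin d → Fin n) (v : Fin d)
    (p : ℕ) : Prop :=
  ∃ b : Fin (p + 1) → Fin d, b (Fin.last p) = v ∧
    ∀ j : Fin p, G.Adj (b j.castSucc) (b j.succ) ∧ φ (b j.castSucc) < φ (b j.succ)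

noncomputable def ellV {d n : ℕ} (G : SimpleGraph (Fin d)) (φ : Fin d → Fin n)
    (v : Fin d) : ℕ :=
  sSup {p | pathSpec G φ v p}

/-- If `φ ∘ a` is monotone and `φ` is a proper coloring, then the position statistic
`ell` computed from the permutation agrees with the vertex statistic `ellV`. -/
lemma ell_eq_ellV {G : SimpleGraph (Fin d)} (a : Equiv.Perm (Fin d))
    {φ : Fin d → Fin n} (hmono : Monotone (φ ∘ a))
    (hprop : ∀ u v : Fin d, G.Adj u v → φ u ≠ φ v) (k : Fin d) :
    ell G a k = ellV G φ (a k) := by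
  have hset : {p | ellSpec G a k p} = {p | pathSpec G φ (a k) p} := by
    ext p
    simp only [Set.mem_setOf_eq]
    constructor
    · rintro ⟨c, hc, hlast, hadj⟩
      refine ⟨a ∘ c, by simp [hlast], fun t => ?_⟩
      refine ⟨hadj t, ?_⟩
      have hle : φ (a (c t.castSucc)) ≤ φ (a (c t.succ)) :=
        hmono (le_of_lt (hc (Fin.castSucc_lt_succ : t.castSucc < t.succ)))
      exact lt_of_le_of_ne hle (hprop _ _ (hadj t))
    · rintro ⟨b, hlast, hb⟩
      refine ⟨fun t => a.symm (b t), ?_, ?_, ?_⟩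
      · rw [Fin.strictMono_iff_lt_succ]
        intro t
        by_contra hcon
        have h2 : a.symm (b t.succ) ≤ a.symm (b t.castSucc) := not_lt.1 hcon
        have := hmono h2
        simp only [Function.comp_apply, Equiv.apply_symm_apply] at this
        exact absurd this (not_le.2 (hb t).2)
      · simp [hlast]
      · intro t
        simpa using (hb t).1
  unfold ell ellV
  rw [hset]

/-- The "pair" condition: `f` is the sequence of colors read along `a`, weakly
increasing and strict at every cut. -/
def PairCond {d n : ℕ} (G : SimpleGraph (Fin d)) (a : Equiv.Perm (Fin d))
    (f : Fin d → Fin n) : Prop :=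
  ∀ i j : Fin d, (i : ℕ) + 1 = (j : ℕ) →
    f i < f j ∨ (f i = f j ∧ ¬ IsCut G a j)

lemma PairCond.monotone {e n : ℕ} {G : SimpleGraph (Fin (e + 1))}
    {a : Equiv.Perm (Fin (e + 1))} {f : Fin (e + 1) → Fin n}
    (hf : PairCond G a f) : Monotone f := by
  rw [Fin.monotone_iff_le_succ]
  intro t
  rcases hf t.castSucc t.succ (by simp) with h | ⟨h, -⟩
  · exact le_of_lt h
  · exact le_of_eq h

lemma not_isCut_imp {j : Fin d} (h : ¬ IsCut G a j) {i : Fin d}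
    (hij : (i : ℕ) + 1 = (j : ℕ)) :
    ell G a j ≤ ell G a i ∧ (ell G a i = ell G a j → a j < a i) := by
  rw [IsCut] at h
  push_neg at h
  obtain ⟨-, h2⟩ := h
  have h3 := h2 i hij
  obtain ⟨h4, h5⟩ := h3
  refine ⟨h4, fun he => ?_⟩
  have hne : a j ≠ a i := fun hc => by
    have hji : j = i := a.injective hc
    rw [hji] at hij
    omega
  exact lt_of_le_of_ne (h5 he) hne



lemma proper_of_pairCond {e n : ℕ} {G : SimpleGraph (Fin (e + 1))}
    {a : Equiv.Perm (Fin (e + 1))} {f : Fin (e + 1) → Fin n} (hf : PairCond G a f) :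
    ∀ u v : Fin (e + 1), G.Adj u v → (f ∘ a.symm) u ≠ (f ∘ a.symm) v := by
  have hmono := hf.monotone
  suffices h : ∀ i j : Fin (e + 1), i < j → G.Adj (a i) (a j) → f i ≠ f j by
    intro u v huv hfe
    rcases lt_trichotomy (a.symm u) (a.symm v) with hlt | heq | hgt
    · exact h _ _ hlt (by simpa using huv) hfe
    · exact (G.ne_of_adj huv) (a.symm.injective heq)
    · exact h _ _ hgt (by simpa using huv.symm) hfe.symm
  intro i j hij hadj hfij
  have hdesc : ∀ m : ℕ, ∀ k : Fin (e + 1), (k : ℕ) = (i : ℕ) + m → k ≤ j →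
      ell G a k ≤ ell G a i := by
    intro m
    induction m with
    | zero =>
      intro k hk _
      have : k = i := Fin.ext (by omega)
      rw [this]
    | succ m ih =>
      intro k hk hkj
      have hke : (k : ℕ) < e + 1 := k.is_lt
      have hk' : (i : ℕ) + m < e + 1 := by omega
      set k' : Fin (e + 1) := ⟨(i : ℕ) + m, hk'⟩ with hk'def
      have hik' : i ≤ k' := by rw [Fin.le_def]; simp [hk'def]
      have hk'k : k' < k := by rw [Fin.lt_def]; simp [hk'def]; omega
      have hk'j : k' ≤ j := le_trans (le_of_lt hk'k) hkj
      have heq : f k' = f k := by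
        have h1 : f i ≤ f k' := hmono hik'
        have h2 : f k' ≤ f k := hmono (le_of_lt hk'k)
        have h3 : f k ≤ f j := hmono hkj
        rw [hfij] at h1
        exact le_antisymm h2 (le_trans h3 h1)
      rcases hf k' k (by simp [hk'def]; omega) with hlt | ⟨-, hnc⟩
      · exact absurd heq (ne_of_lt hlt)
      · exact le_trans (not_isCut_imp hnc (by simp [hk'def]; omega)).1
          (ih k' rfl hk'j)
  have h1 : ell G a j ≤ ell G a i :=
    hdesc ((j : ℕ) - (i : ℕ)) j (by rw [Fin.lt_def] at hij; omega) le_rfl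
  exact absurd (ell_lt_ell hij hadj) (not_lt.2 h1)

/-- The sorting key: colors ascending, then `ellV` descending, then vertex label
descending. -/
noncomputable def key {d n : ℕ} (G : SimpleGraph (Fin d)) (φ : Fin d → Fin n)
    (v : Fin d) : Fin n ×ₗ (ℕᵒᵈ ×ₗ (Fin d)ᵒᵈ) :=
  toLex (φ v, toLex (OrderDual.toDual (ellV G φ v), OrderDual.toDual v))

lemma key_lt_iff {G : SimpleGraph (Fin d)} {φ : Fin d → Fin n} {u v : Fin d} :
    key G φ u < key G φ v ↔
      φ u < φ v ∨ (φ u = φ v ∧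
        (ellV G φ v < ellV G φ u ∨ (ellV G φ u = ellV G φ v ∧ v < u))) := by
  unfold key
  rw [Prod.Lex.lt_iff, Prod.Lex.lt_iff]
  simp [OrderDual.toDual_lt_toDual]

lemma key_injective {G : SimpleGraph (Fin d)} {φ : Fin d → Fin n} :
    Function.Injective (key G φ) := by
  intro u v h
  unfold key at h
  have h2 := congrArg (fun x => (OrderDual.ofDual (ofLex (ofLex x).2).2)) h
  simpa using h2

lemma monotone_of_key_strictMono {G : SimpleGraph (Fin d)} {φ : Fin d → Fin n}
    {a : Equiv.Perm (Fin d)} (h : StrictMono (key G φ ∘ a)) :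
    Monotone (φ ∘ a) := by
  intro i j hij
  rcases eq_or_lt_of_le hij with rfl | hlt
  · exact le_rfl
  · have := h hlt
    rw [Function.comp_apply, Function.comp_apply, key_lt_iff] at this
    rcases this with h1 | ⟨h1, -⟩
    · exact le_of_lt h1
    · exact le_of_eq h1

lemma pairCond_of_key_strictMono {e n : ℕ} {G : SimpleGraph (Fin (e + 1))}
    {φ : Fin (e + 1) → Fin n} (hprop : ∀ u v, G.Adj u v → φ u ≠ φ v)
    {a : Equiv.Perm (Fin (e + 1))} (h : StrictMono (key G φ ∘ a)) :
    PairCond G a (φ ∘ a) := by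
  have hmono := monotone_of_key_strictMono h
  intro i j hij
  have hijlt : i < j := by rw [Fin.lt_def]; omega
  have hk := h hijlt
  rw [Function.comp_apply, Function.comp_apply, key_lt_iff] at hk
  rcases hk with h1 | ⟨h1, h2⟩
  · exact Or.inl h1
  · refine Or.inr ⟨h1, fun hcut => ?_⟩
    rcases hcut with h0 | ⟨i', hi', hcc⟩
    · omega
    · have hii' : i' = i := Fin.ext (by omega)
      rw [hii'] at hcc
      rw [ell_eq_ellV a hmono hprop i, ell_eq_ellV a hmono hprop j] at hcc
      rcases hcc with hc1 | ⟨hc1, hc2⟩ <;> rcases h2 with hd1 | ⟨hd1, hd2⟩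
      · omega
      · omega
      · omega
      · exact absurd hd2 (not_lt.2 (le_of_lt hc2))

lemma key_strictMono_of_pairCond {e n : ℕ} {G : SimpleGraph (Fin (e + 1))}
    {a : Equiv.Perm (Fin (e + 1))} {f : Fin (e + 1) → Fin n} (hf : PairCond G a f) :
    StrictMono (key G (f ∘ a.symm) ∘ a) := by
  have hprop := proper_of_pairCond hf
  have hcomp : (f ∘ ⇑a.symm) ∘ ⇑a = f := by
    funext v; simp
  have hmono : Monotone ((f ∘ ⇑a.symm) ∘ ⇑a) := by rw [hcomp]; exact hf.monotone
  rw [Fin.strictMono_iff_lt_succ]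
  intro t
  rw [Function.comp_apply, Function.comp_apply, key_lt_iff]
  have hval : ((t.castSucc : Fin (e + 1)) : ℕ) + 1 = (t.succ : ℕ) := by simp
  have hfa : ∀ v, (f ∘ ⇑a.symm) (a v) = f v := fun v => by simp
  rcases hf t.castSucc t.succ hval with h1 | ⟨h1, h2⟩
  · exact Or.inl (by rw [hfa, hfa]; exact h1)
  · refine Or.inr ⟨by rw [hfa, hfa]; exact h1, ?_⟩
    have hnc := not_isCut_imp h2 hval
    rw [ell_eq_ellV a hmono hprop, ell_eq_ellV a hmono hprop] at hnc
    rcases eq_or_lt_of_le hnc.1 with he | hlt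
    · exact Or.inr ⟨he.symm, hnc.2 he.symm⟩
    · exact Or.inl hlt



lemma sort_unique {m : ℕ} {α : Type*} [LinearOrder α] {g : Fin m → α}
    (hg : Function.Injective g) {σ : Equiv.Perm (Fin m)}
    (h : StrictMono (g ∘ σ)) : σ = Tuple.sort g := by
  rw [Tuple.eq_sort_iff]
  exact ⟨h.monotone, fun i j hij heq =>
    absurd (σ.injective (hg heq)) (ne_of_lt hij)⟩

lemma sort_key_strictMono {e n : ℕ} (G : SimpleGraph (Fin (e + 1)))
    (φ : Fin (e + 1) → Fin n) :
    StrictMono (key G φ ∘ ⇑(Tuple.sort (key G φ))) :=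
  (Tuple.monotone_sort (key G φ)).strictMono_of_injective
    (key_injective.comp (Equiv.injective _))

noncomputable def colorEquiv (e n : ℕ) (G : SimpleGraph (Fin (e + 1))) :
    {φ : Fin (e + 1) → Fin n // ∀ u v, G.Adj u v → φ u ≠ φ v} ≃
      Σ a : Equiv.Perm (Fin (e + 1)), {f : Fin (e + 1) → Fin n // PairCond G a f} where
  toFun φh :=
    ⟨Tuple.sort (key G φh.1), ⟨φh.1 ∘ ⇑(Tuple.sort (key G φh.1)),
      pairCond_of_key_strictMono φh.2 (sort_key_strictMono G φh.1)⟩⟩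
  invFun af := ⟨af.2.1 ∘ ⇑af.1.symm, proper_of_pairCond af.2.2⟩
  left_inv := by
    rintro ⟨φ, hφ⟩
    apply Subtype.ext
    funext v
    simp
  right_inv := by
    rintro ⟨a, f, hf⟩
    have hσ : Tuple.sort (key G (f ∘ ⇑a.symm)) = a :=
      (sort_unique key_injective (key_strictMono_of_pairCond hf)).symm
    refine Sigma.ext hσ ((Subtype.heq_iff_coe_eq fun x => by
      show PairCond G (Tuple.sort (key G (f ∘ ⇑a.symm))) x ↔ PairCond G a x
      rw [hσ]).2 ?_)
    show (f ∘ ⇑a.symm) ∘ ⇑(Tuple.sort (key G (f ∘ ⇑a.symm))) = f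
    rw [hσ]
    funext v
    simp



open scoped Classical in
/-- Number of non-cut positions `≤ j`. -/
noncomputable def sFun {d : ℕ} (G : SimpleGraph (Fin d)) (a : Equiv.Perm (Fin d))
    (j : Fin d) : ℕ :=
  (Finset.univ.filter (fun i : Fin d => i ≤ j ∧ ¬ IsCut G a i)).card

open scoped Classical

lemma isCut_zero {j : Fin d} (h : (j : ℕ) = 0) : IsCut G a j := Or.inl h

lemma numCuts_eq_filter : numCuts G a = (Finset.univ.filter (IsCut G a)).card := by
  rw [numCuts, Nat.card_eq_fintype_card]
  exact Fintype.card_subtype _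

lemma numCuts_le : numCuts G a ≤ d := by
  rw [numCuts_eq_filter]
  exact le_trans (Finset.card_filter_le _ _) (by simp)

lemma sFun_zero {j : Fin d} (h : (j : ℕ) = 0) : sFun G a j = 0 := by
  rw [sFun, Finset.card_eq_zero, Finset.filter_eq_empty_iff]
  intro i _
  rw [not_and, not_not]
  intro hij
  refine isCut_zero ?_
  rw [Fin.le_def, h] at hij
  omega

lemma sFun_succ_cut {i j : Fin d} (hij : (i : ℕ) + 1 = (j : ℕ))
    (hc : IsCut G a j) : sFun G a j = sFun G a i := by
  rw [sFun, sFun]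
  congr 1
  apply Finset.filter_congr
  intro k _
  rw [Fin.le_def, Fin.le_def]
  constructor
  · rintro ⟨hk, hnc⟩
    refine ⟨?_, hnc⟩
    rcases Nat.lt_or_ge (k : ℕ) (j : ℕ) with h1 | h1
    · omega
    · exfalso
      have : k = j := Fin.ext (by omega)
      rw [this] at hnc
      exact hnc hc
  · rintro ⟨hk, hnc⟩
    exact ⟨by omega, hnc⟩

lemma sFun_succ_notCut {i j : Fin d} (hij : (i : ℕ) + 1 = (j : ℕ))
    (hc : ¬ IsCut G a j) : sFun G a j = sFun G a i + 1 := by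
  rw [sFun, sFun]
  have hins : (Finset.univ.filter (fun k : Fin d => k ≤ j ∧ ¬ IsCut G a k)) =
      insert j (Finset.univ.filter (fun k : Fin d => k ≤ i ∧ ¬ IsCut G a k)) := by
    ext k
    simp only [Finset.mem_filter, Finset.mem_univ, true_and, Finset.mem_insert,
      Fin.le_def]
    constructor
    · rintro ⟨hk, hnc⟩
      rcases Nat.lt_or_ge (k : ℕ) (j : ℕ) with h1 | h1
      · exact Or.inr ⟨by omega, hnc⟩
      · exact Or.inl (Fin.ext (by omega))
    · rintro (rfl | ⟨hk, hnc⟩)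
      · exact ⟨le_rfl, hc⟩
      · exact ⟨by omega, hnc⟩
  rw [hins, Finset.card_insert_of_notMem]
  simp only [Finset.mem_filter, Finset.mem_univ, true_and, Fin.le_def, not_and]
  intro hk
  omega

lemma card_noncuts : (Finset.univ.filter (fun i : Fin d => ¬ IsCut G a i)).card =
    d - numCuts G a := by
  have h := Finset.card_filter_add_card_filter_not
    (s := (Finset.univ : Finset (Fin d))) (p := IsCut G a)
  rw [← numCuts_eq_filter] at h
  simp only [Finset.card_univ, Fintype.card_fin] at h
  omega

lemma one_le_numCuts {e : ℕ} {G : SimpleGraph (Fin (e + 1))}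
    {a : Equiv.Perm (Fin (e + 1))} : 1 ≤ numCuts G a := by
  rw [numCuts_eq_filter, Nat.one_le_iff_ne_zero, ← Nat.pos_iff_ne_zero,
    Finset.card_pos]
  exact ⟨0, by simp [isCut_zero (j := (0 : Fin (e + 1))) rfl]⟩

lemma sFun_le (j : Fin d) : sFun G a j ≤ d - numCuts G a := by
  rw [sFun, ← card_noncuts]
  apply Finset.card_le_card
  intro k hk
  simp only [Finset.mem_filter, Finset.mem_univ, true_and] at hk ⊢
  exact hk.2

lemma lb_sFun (j : Fin d) : (j : ℕ) + 1 ≤ numCuts G a + sFun G a j := by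
  have hT : (Finset.univ.filter (fun i : Fin d => i ≤ j)).card = (j : ℕ) + 1 := by
    have : (Finset.univ.filter (fun i : Fin d => i ≤ j)) = Finset.Iic j := by
      ext k; simp
    rw [this, Fin.card_Iic]
  have hsplit := Finset.card_filter_add_card_filter_not
    (s := Finset.univ.filter (fun i : Fin d => i ≤ j)) (p := IsCut G a)
  rw [Finset.filter_filter, Finset.filter_filter, hT] at hsplit
  have h1 : (Finset.univ.filter (fun i : Fin d => i ≤ j ∧ IsCut G a i)).card ≤
      numCuts G a := by
    rw [numCuts_eq_filter]
    apply Finset.card_le_card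
    intro k hk
    simp only [Finset.mem_filter, Finset.mem_univ, true_and] at hk ⊢
    exact hk.2
  rw [sFun]
  omega



lemma strictMono_gap {k m : ℕ} {g : Fin k → Fin m} (hg : StrictMono g) :
    ∀ (mm : ℕ) (i j : Fin k), (i : ℕ) + mm = (j : ℕ) → (g i : ℕ) + mm ≤ (g j : ℕ) := by
  intro mm
  induction mm with
  | zero =>
    intro i j h
    have : i = j := Fin.ext (by omega)
    rw [this]
    omega
  | succ mm ih =>
    intro i j h
    have hi' : (i : ℕ) + 1 < k := by have := j.is_lt; omega
    set i' : Fin k := ⟨(i : ℕ) + 1, hi'⟩ with hi'def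
    have h1 : g i < g i' := hg (by rw [Fin.lt_def]; simp [hi'def])
    have h2 := ih i' j (by simp [hi'def]; omega)
    rw [Fin.lt_def] at h1
    omega

lemma sFun_le_g {e m : ℕ} {G : SimpleGraph (Fin (e + 1))} {a : Equiv.Perm (Fin (e + 1))}
    {g : Fin (e + 1) → Fin m} (hg : StrictMono g) (j : Fin (e + 1)) :
    sFun G a j ≤ (g j : ℕ) := by
  induction j using Fin.induction with
  | zero => simp [sFun_zero (j := (0 : Fin (e + 1))) rfl]
  | succ t ih =>
    have hval : ((t.castSucc : Fin (e + 1)) : ℕ) + 1 = (t.succ : ℕ) := by simp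
    have hlt : (g t.castSucc : ℕ) < (g t.succ : ℕ) := by
      have := hg (Fin.castSucc_lt_succ : t.castSucc < t.succ)
      rwa [Fin.lt_def] at this
    by_cases hc : IsCut G a t.succ
    · rw [sFun_succ_cut hval hc]
      omega
    · rw [sFun_succ_notCut hval hc]
      omega

set_option maxHeartbeats 1000000 in
noncomputable def countEquiv (e n : ℕ) (G : SimpleGraph (Fin (e + 1)))
    (a : Equiv.Perm (Fin (e + 1))) :
    {f : Fin (e + 1) → Fin n // PairCond G a f} ≃
      {g : Fin (e + 1) → Fin (n + (e + 1 - numCuts G a)) // StrictMono g} where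
  toFun fh :=
    ⟨fun j => ⟨(fh.1 j : ℕ) + sFun G a j,
      add_lt_add_of_lt_of_le (fh.1 j).is_lt (sFun_le j)⟩, by
      rw [Fin.strictMono_iff_lt_succ]
      intro t
      have hval : ((t.castSucc : Fin (e + 1)) : ℕ) + 1 = (t.succ : ℕ) := by simp
      rw [Fin.mk_lt_mk]
      rcases fh.2 t.castSucc t.succ hval with h1 | ⟨h1, h2⟩
      · rw [Fin.lt_def] at h1
        have hle : sFun G a t.castSucc ≤ sFun G a t.succ := by
          by_cases hc : IsCut G a t.succ
          · rw [sFun_succ_cut hval hc]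
          · rw [sFun_succ_notCut hval hc]; omega
        omega
      · rw [sFun_succ_notCut hval h2]
        have : (fh.1 t.castSucc : ℕ) = (fh.1 t.succ : ℕ) := by rw [h1]
        omega⟩
  invFun gh :=
    ⟨fun j => ⟨(gh.1 j : ℕ) - sFun G a j, by
      have h1 := strictMono_gap gh.2 (e - (j : ℕ)) j (Fin.last e)
        (by simp [Fin.last]; have := j.is_lt; omega)
      have h7 := strictMono_gap gh.2 ((j : ℕ)) ⟨0, by omega⟩ j (by simp)
      have h2 := (gh.1 (Fin.last e)).is_lt
      have h3 := lb_sFun (G := G) (a := a) j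
      have h4 := numCuts_le (G := G) (a := a)
      have h6 := one_le_numCuts (G := G) (a := a)
      have h5 := j.is_lt
      omega⟩, by
      intro i j hij
      have hlt : (gh.1 i : ℕ) < (gh.1 j : ℕ) := by
        have := gh.2 (show i < j by rw [Fin.lt_def]; omega)
        rwa [Fin.lt_def] at this
      have hsg : sFun G a i ≤ (gh.1 i : ℕ) := sFun_le_g gh.2 i
      by_cases hc : IsCut G a j
      · left
        rw [Fin.mk_lt_mk, sFun_succ_cut hij hc]
        omega
      · have hs := sFun_succ_notCut hij hc
        have hle : (gh.1 i : ℕ) - sFun G a i ≤ (gh.1 j : ℕ) - sFun G a j := by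
          omega
        rcases eq_or_lt_of_le hle with he | hl
        · exact Or.inr ⟨Fin.ext he, hc⟩
        · exact Or.inl (by rw [Fin.mk_lt_mk]; exact hl)⟩
  left_inv := by
    rintro ⟨f, hf⟩
    apply Subtype.ext
    funext j
    apply Fin.ext
    simp
  right_inv := by
    rintro ⟨g, hg⟩
    apply Subtype.ext
    funext j
    apply Fin.ext
    simp [Nat.sub_add_cancel (sFun_le_g hg j)]



noncomputable def strictMonoFinsetEquiv (k m : ℕ) :
    {g : Fin k → Fin m // StrictMono g} ≃ {s : Finset (Fin m) // s.card = k} where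
  toFun gh := ⟨Finset.univ.image gh.1, by
    rw [Finset.card_image_of_injective _ gh.2.injective, Finset.card_univ,
      Fintype.card_fin]⟩
  invFun sh := ⟨⇑(sh.1.orderEmbOfFin sh.2), (sh.1.orderEmbOfFin sh.2).strictMono⟩
  left_inv gh := Subtype.ext
    (Finset.orderEmbOfFin_unique _
      (fun x => Finset.mem_image_of_mem _ (Finset.mem_univ x)) gh.2).symm
  right_inv sh := Subtype.ext (by
    apply Finset.coe_injective
    rw [Finset.coe_image, Finset.coe_univ, Set.image_univ,
      Finset.range_orderEmbOfFin])

lemma card_strictMono_fun (k m : ℕ) :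
    Nat.card {g : Fin k → Fin m // StrictMono g} = m.choose k := by
  rw [Nat.card_congr (strictMonoFinsetEquiv k m), Nat.card_eq_fintype_card,
    Fintype.card_finset_len, Fintype.card_fin]

lemma card_pairCond (e n : ℕ) (G : SimpleGraph (Fin (e + 1)))
    (a : Equiv.Perm (Fin (e + 1))) :
    Nat.card {f : Fin (e + 1) → Fin n // PairCond G a f} =
      (n + (e + 1 - numCuts G a)).choose (e + 1) := by
  rw [Nat.card_congr (countEquiv e n G a), card_strictMono_fun]

lemma chromVal_eq (e n : ℕ) (G : SimpleGraph (Fin (e + 1))) :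
    chromVal G n =
      ∑ a : Equiv.Perm (Fin (e + 1)),
        (n + (e + 1 - numCuts G a)).choose (e + 1) := by
  rw [chromVal, Nat.card_congr (colorEquiv e n G), Nat.card_eq_fintype_card,
    Fintype.card_sigma]
  exact Finset.sum_congr rfl fun a _ => by
    rw [← Nat.card_eq_fintype_card, card_pairCond]



end WTC

open WTC in
/-- In `ℤ⟦t⟧` one has
`(1 − t)^{d+1} · Σ_{n ≥ 0} χ_G(n) tⁿ = Σ_{π ∈ S_d} t^{c(π)}`. -/
theorem w_transform_chromatic {d : ℕ} (hd : 1 ≤ d) (G : SimpleGraph (Fin d)) :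
    (1 - PowerSeries.X : PowerSeries ℤ) ^ (d + 1) *
      PowerSeries.mk (fun n => (chromVal G n : ℤ)) =
    ∑ π : Equiv.Perm (Fin d), (PowerSeries.X : PowerSeries ℤ) ^ numCuts G π := by
  obtain ⟨e, rfl⟩ : ∃ e, d = e + 1 := ⟨d - 1, by omega⟩
  have hmk : (PowerSeries.mk (fun n => (chromVal G n : ℤ)) : PowerSeries ℤ) =
      ∑ a : Equiv.Perm (Fin (e + 1)),
        (PowerSeries.mk fun n => ((e + 1 + n).choose (e + 1) : ℤ)) *
          PowerSeries.X ^ numCuts G a := by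
    ext k
    rw [PowerSeries.coeff_mk, map_sum]
    rw [chromVal_eq e k G]
    push_cast
    refine Finset.sum_congr rfl fun a _ => ?_
    rw [PowerSeries.coeff_mul_X_pow']
    have hc := numCuts_le (G := G) (a := a)
    by_cases h : numCuts G a ≤ k
    · rw [if_pos h, PowerSeries.coeff_mk]
      have : k + (e + 1 - numCuts G a) = e + 1 + (k - numCuts G a) := by omega
      rw [this]
    · rw [if_neg h]
      have : k + (e + 1 - numCuts G a) < e + 1 := by omega
      rw [Nat.choose_eq_zero_of_lt this]
      norm_num
  rw [hmk, Finset.mul_sum]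
  refine Finset.sum_congr rfl fun a _ => ?_
  rw [← mul_assoc, mul_comm ((1 - PowerSeries.X : PowerSeries ℤ) ^ (e + 1 + 1)),
    PowerSeries.mk_add_choose_mul_one_sub_pow_eq_one, one_mul]
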